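/- Let β > 0, λ > 0 and H ∈ ℝ^{m×n}. Then the set Prox_{βλ‖·‖_{0,2}}(H) := argmin_{W∈ℝ^{m×n}} { λ‖W‖_{0,2} + (1/(2β))‖W − H‖² } is nonempty, and a matrix W belongs to this set if and only if for every row index s ∈ [m]: W_{s:} = 0 whenever ‖H_{s:}‖ < √(2βλ); W_{s:} = H_{s:} whenever ‖H_{s:}‖ > √(2βλ); and W_{s:} ∈ {0, H_{s:}} whenever ‖H_{s:}‖ = √(2βλ). -/

import Mathlib

set_option autoImplicit false

open Finset

/-- Squared Frobenius norm of a matrix. -/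
def frobSq {m n : ℕ} (W : Matrix (Fin m) (Fin n) ℝ) : ℝ :=
  ∑ i, ∑ j, (W i j) ^ 2

/-- Euclidean norm of a (row) vector. -/
noncomputable def rowNorm {n : ℕ} (v : Fin n → ℝ) : ℝ :=
  Real.sqrt (∑ j, (v j) ^ 2)

open Classical in
/-- `‖W‖_{0,2}`: the number of nonzero rows of `W`, as a real number. -/
noncomputable def norm02 {m n : ℕ} (W : Matrix (Fin m) (Fin n) ℝ) : ℝ :=
  ((Finset.univ.filter fun s : Fin m => W s ≠ 0).card : ℝ)

/-- The proximal operator (as a set of global minimizers):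
`Prox_β G (H) = argmin_W { G(W) + (1/(2β))‖W − H‖² }`. -/
def ProxSet {m n : ℕ} (β : ℝ) (G : Matrix (Fin m) (Fin n) ℝ → ℝ)
    (H : Matrix (Fin m) (Fin n) ℝ) : Set (Matrix (Fin m) (Fin n) ℝ) :=
  {W | ∀ Z : Matrix (Fin m) (Fin n) ℝ,
    G W + (1 / (2 * β)) * frobSq (W - H) ≤ G Z + (1 / (2 * β)) * frobSq (Z - H)}

open Classical in
/-- Per-row objective. -/
noncomputable def phi {n : ℕ} (lam c : ℝ) (h v : Fin n → ℝ) : ℝ :=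
  (if v = 0 then 0 else lam) + c * ∑ j, (v j - h j) ^ 2

lemma sum_sq_eq_zero_iff {n : ℕ} (v : Fin n → ℝ) : (∑ j, (v j) ^ 2) = 0 ↔ v = 0 := by
  rw [Finset.sum_eq_zero_iff_of_nonneg (fun _ _ => sq_nonneg _)]
  constructor
  · intro h; funext j
    exact pow_eq_zero_iff (two_ne_zero) |>.mp (h j (mem_univ j))
  · intro h j _; rw [h]; simp

lemma phi_zero {n : ℕ} (lam c : ℝ) (h : Fin n → ℝ) :
    phi lam c h 0 = c * ∑ j, (h j) ^ 2 := by
  simp [phi]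

lemma phi_ne {n : ℕ} (lam c : ℝ) (h v : Fin n → ℝ) (hv : v ≠ 0) :
    phi lam c h v = lam + c * ∑ j, (v j - h j) ^ 2 := by
  simp [phi, hv]

lemma phi_min_char {n : ℕ} (lam c : ℝ) (hlam : 0 < lam) (hc : 0 < c)
    (h v : Fin n → ℝ) :
    (∀ u, phi lam c h v ≤ phi lam c h u) ↔
      (((∑ j, (h j) ^ 2) < lam / c → v = 0) ∧
       (lam / c < ∑ j, (h j) ^ 2 → v = h) ∧
       ((∑ j, (h j) ^ 2) = lam / c → v = 0 ∨ v = h)) := by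
  set S := ∑ j, (h j) ^ 2 with hS
  have hS0 : 0 ≤ S := Finset.sum_nonneg fun _ _ => sq_nonneg _
  have hcS_lt : S < lam / c ↔ c * S < lam := by
    rw [lt_div_iff₀ hc]; constructor <;> intro <;> linarith [mul_comm c S]
  have hcS_gt : lam / c < S ↔ lam < c * S := by
    rw [div_lt_iff₀ hc]; constructor <;> intro <;> linarith [mul_comm c S]
  have hcS_eq : S = lam / c ↔ c * S = lam := by
    rw [eq_div_iff (ne_of_gt hc)]; constructor <;> intro <;> linarith [mul_comm c S]
  -- value at h itself when nonzero
  have hSposne : 0 < S → h ≠ 0 := by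
    intro hpos h0
    have : S = 0 := by simp [hS, h0]
    linarith
  have hsub : ∀ u : Fin n → ℝ, u ≠ 0 → lam ≤ phi lam c h u := by
    intro u hu
    rw [phi_ne lam c h u hu]
    have : 0 ≤ ∑ j, (u j - h j) ^ 2 := Finset.sum_nonneg fun _ _ => sq_nonneg _
    nlinarith
  have heqh : ∀ u : Fin n → ℝ, u ≠ 0 → phi lam c h u ≤ lam → u = h := by
    intro u hu hle
    rw [phi_ne lam c h u hu] at hle
    have h1 : ∑ j, (u j - h j) ^ 2 ≤ 0 := by nlinarith
    have h2 : (∑ j, ((u - h) j) ^ 2) = 0 := by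
      have := Finset.sum_nonneg (fun j (_ : j ∈ univ) => sq_nonneg ((u - h) j))
      have heq : (∑ j, ((u - h) j) ^ 2) = ∑ j, (u j - h j) ^ 2 := by
        apply Finset.sum_congr rfl; intro j _; simp
      linarith [heq]
    have := (sum_sq_eq_zero_iff (u - h)).mp h2
    have : u - h = 0 := this
    funext j
    have := congrFun this j
    simpa [sub_eq_zero] using this
  constructor
  · intro hmin
    refine ⟨?_, ?_, ?_⟩
    · intro hlt
      by_contra hv
      have h1 := hsub v hv
      have h2 := hmin 0
      rw [phi_zero] at h2
      have := hcS_lt.mp hlt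
      linarith
    · intro hgt
      have hcS := hcS_gt.mp hgt
      have hh : h ≠ 0 := hSposne (by nlinarith)
      have hph : phi lam c h h = lam := by
        rw [phi_ne lam c h h hh]; simp
      have h2 := hmin h
      rw [hph] at h2
      have hv : v ≠ 0 := by
        intro h0
        rw [h0, phi_zero] at h2
        linarith
      exact heqh v hv h2
    · intro heq
      by_cases hv : v = 0
      · exact Or.inl hv
      · refine Or.inr ?_
        have h2 := hmin 0
        rw [phi_zero] at h2
        have := hcS_eq.mp heq
        exact heqh v hv (by linarith)
  · intro ⟨h1, h2, h3⟩ u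
    have hlow : ∀ u : Fin n → ℝ, min (c * S) lam ≤ phi lam c h u := by
      intro u
      by_cases hu : u = 0
      · rw [hu, phi_zero]; exact min_le_left _ _
      · exact le_trans (min_le_right _ _) (hsub u hu)
    rcases lt_trichotomy S (lam / c) with hlt | heq | hgt
    · rw [h1 hlt, phi_zero]
      calc c * S ≤ min (c * S) lam := le_min (le_refl _) (le_of_lt (hcS_lt.mp hlt))
        _ ≤ phi lam c h u := hlow u
    · rcases h3 heq with h0 | hh
      · rw [h0, phi_zero]
        calc c * S ≤ min (c * S) lam := le_min (le_refl _) (le_of_eq (hcS_eq.mp heq))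
          _ ≤ phi lam c h u := hlow u
      · have hcS := hcS_eq.mp heq
        have hhne : h ≠ 0 := hSposne (by nlinarith)
        have hval : phi lam c h h = lam := by
          rw [phi_ne lam c h h hhne]; simp
        rw [hh, hval]
        calc lam = min (c * S) lam := by rw [min_eq_right hcS.ge]
          _ ≤ phi lam c h u := hlow u
    · have hcS := hcS_gt.mp hgt
      have hhne : h ≠ 0 := hSposne (by nlinarith)
      have hval : phi lam c h h = lam := by
        rw [phi_ne lam c h h hhne]; simp
      rw [h2 hgt, hval]
      calc lam = min (c * S) lam := by rw [min_eq_right hcS.le]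
        _ ≤ phi lam c h u := hlow u

lemma obj_split {m n : ℕ} (lam c : ℝ) (W H : Matrix (Fin m) (Fin n) ℝ) :
    lam * norm02 W + c * frobSq (W - H) = ∑ s, phi lam c (H s) (W s) := by
  classical
  have h1 : lam * norm02 W = ∑ s : Fin m, (if W s = 0 then (0:ℝ) else lam) := by
    rw [norm02, Finset.card_filter]
    push_cast
    rw [Finset.mul_sum]
    apply Finset.sum_congr rfl
    intro s _
    by_cases h : W s = 0 <;> simp [h]
  have h2 : c * frobSq (W - H) = ∑ s : Fin m, c * ∑ j, (W s j - H s j) ^ 2 := by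
    rw [frobSq, Finset.mul_sum]
    apply Finset.sum_congr rfl
    intro s _
    simp [Matrix.sub_apply]
  rw [h1, h2, ← Finset.sum_add_distrib]
  apply Finset.sum_congr rfl
  intro s _
  simp [phi]

lemma mem_prox_iff_rows {m n : ℕ} (β lam : ℝ)
    (H W : Matrix (Fin m) (Fin n) ℝ) :
    W ∈ ProxSet β (fun W => lam * norm02 W) H ↔
      ∀ s, ∀ u : Fin n → ℝ,
        phi lam (1 / (2 * β)) (H s) (W s) ≤ phi lam (1 / (2 * β)) (H s) u := by
  classical
  set c := 1 / (2 * β) with hc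
  constructor
  · intro hW s u
    have h := hW (Function.update W s u)
    simp only at h
    rw [obj_split lam c W H, obj_split lam c (Function.update W s u) H] at h
    rw [← Finset.add_sum_erase _ _ (mem_univ s), ← Finset.add_sum_erase _ _ (mem_univ s)] at h
    have heq : ∑ x ∈ univ.erase s, phi lam c (H x) (Function.update W s u x)
        = ∑ x ∈ univ.erase s, phi lam c (H x) (W x) := by
      apply Finset.sum_congr rfl
      intro x hx
      exact congrArg _ (Function.update_of_ne (Finset.ne_of_mem_erase hx) _ _)
    rw [heq] at h
    have hup : Function.update W s u s = u := Function.update_self s u W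
    rw [hup] at h
    linarith
  · intro hrows Z
    simp only
    rw [obj_split lam c W H, obj_split lam c Z H]
    exact Finset.sum_le_sum fun s _ => hrows s (Z s)

/-- the proximal set of `λ‖·‖_{0,2}` at `H` is nonempty, and `W` belongs
to it iff each row `W_{s:}` is `0` when `‖H_{s:}‖ < √(2βλ)`, equals `H_{s:}` when
`‖H_{s:}‖ > √(2βλ)`, and is `0` or `H_{s:}` when `‖H_{s:}‖ = √(2βλ)`. -/
theorem prox_rowSparsity_characterization
    (m n : ℕ) (β lam : ℝ) (hβ : 0 < β) (hlam : 0 < lam)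
    (H : Matrix (Fin m) (Fin n) ℝ) :
    (ProxSet β (fun W => lam * norm02 W) H).Nonempty ∧
    (∀ W : Matrix (Fin m) (Fin n) ℝ,
      W ∈ ProxSet β (fun W => lam * norm02 W) H ↔
        ∀ s : Fin m,
          (rowNorm (H s) < Real.sqrt (2 * β * lam) → W s = 0) ∧
          (rowNorm (H s) > Real.sqrt (2 * β * lam) → W s = H s) ∧
          (rowNorm (H s) = Real.sqrt (2 * β * lam) → W s = 0 ∨ W s = H s)) := by
  classical
  have hc : 0 < 1 / (2 * β) := by positivity
  have hT : lam / (1 / (2 * β)) = 2 * β * lam := by field_simp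
  have hT0 : (0:ℝ) ≤ 2 * β * lam := by positivity
  have hiff : ∀ W : Matrix (Fin m) (Fin n) ℝ,
      W ∈ ProxSet β (fun W => lam * norm02 W) H ↔
        ∀ s : Fin m,
          (rowNorm (H s) < Real.sqrt (2 * β * lam) → W s = 0) ∧
          (rowNorm (H s) > Real.sqrt (2 * β * lam) → W s = H s) ∧
          (rowNorm (H s) = Real.sqrt (2 * β * lam) → W s = 0 ∨ W s = H s) := by
    intro W
    rw [mem_prox_iff_rows]
    apply forall_congr'
    intro s
    rw [phi_min_char lam (1 / (2 * β)) hlam hc (H s) (W s)]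
    have hS0 : (0:ℝ) ≤ ∑ j, (H s j) ^ 2 := Finset.sum_nonneg fun _ _ => sq_nonneg _
    have e1 : (∑ j, (H s j) ^ 2) < lam / (1 / (2 * β)) ↔
        rowNorm (H s) < Real.sqrt (2 * β * lam) := by
      rw [hT, rowNorm, Real.sqrt_lt_sqrt_iff hS0]
    have e2 : lam / (1 / (2 * β)) < ∑ j, (H s j) ^ 2 ↔
        rowNorm (H s) > Real.sqrt (2 * β * lam) := by
      rw [hT, rowNorm, gt_iff_lt, Real.sqrt_lt_sqrt_iff hT0]
    have e3 : (∑ j, (H s j) ^ 2) = lam / (1 / (2 * β)) ↔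
        rowNorm (H s) = Real.sqrt (2 * β * lam) := by
      rw [hT, rowNorm, Real.sqrt_inj hS0 hT0]
    rw [e1, e2, e3]
  refine ⟨?_, hiff⟩
  refine ⟨fun s => if rowNorm (H s) < Real.sqrt (2 * β * lam) then 0 else H s, ?_⟩
  refine (hiff _).mpr ?_; beta_reduce
  intro s
  refine ⟨fun h => ?_, fun h => ?_, fun h => ?_⟩
  · simp [h]
  · rw [if_neg (not_lt_of_gt h)]
  · exact Or.inr (by rw [if_neg (not_lt_of_ge h.ge)])
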